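/- Let 𝒞 be a class of directed multigraphs closed under taking minors, and let Γ be a UCRPQ. Define App(Γ,𝒞) as the (possibly infinite) union of all CRPQs α whose underlying graph is in 𝒞 such that α is a contraction of some CQ η for which some expansion ξ of Γ has a homomorphism ξ → η. Then: (1) every member of App(Γ,𝒞) has underlying graph in 𝒞; (2) App(Γ,𝒞) is contained in Γ; (3) for every (possibly infinite) union Δ of CRPQs with underlying graphs in 𝒞, if Δ is contained in Γ then Δ is contained in App(Γ,𝒞). Hence App(Γ,𝒞) is the maximal under-approximation of Γ by infinitary unions of CRPQs over 𝒞. -/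

import Mathlib

/-- A graph database over alphabet `A`: an edge-labelled directed graph. -/
structure DB (A : Type) where
  V : Type
  edge : V → A → V → Prop

/-- `G.path w u v`: there is a directed path from `u` to `v` labelled by the word `w`. -/
def DB.path {A : Type} (G : DB A) : List A → G.V → G.V → Prop
  | [], u, v => u = v
  | a :: w, u, v => ∃ x, G.edge u a x ∧ DB.path G w x v

/-- A finite directed multigraph with a distinguished set of output vertices. -/
structure MGraph where
  V : Type
  E : Type
  src : E → V
  tgt : E → V
  out : Set V

namespace MGraph

/-- An internal vertex: a non-output vertex of in-degree 1 and out-degree 1. -/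
def Internal (G : MGraph) (v : G.V) : Prop :=
  v ∉ G.out ∧ (∃! e, G.tgt e = v) ∧ (∃! e, G.src e = v)

def External (G : MGraph) (v : G.V) : Prop := ¬ G.Internal v

/-- A list of edges forms a directed walk. -/
def IsWalk (G : MGraph) : List G.E → Prop
  | [] => True
  | [_] => True
  | e₁ :: e₂ :: es => G.tgt e₁ = G.src e₂ ∧ G.IsWalk (e₂ :: es)

/-- The list of vertices visited by a walk. -/
def walkVerts (G : MGraph) : List G.E → List G.V
  | [] => []
  | e :: es => G.src e :: G.tgt e :: es.map G.tgt

/-- A one-way internal path: a nonempty simple directed path all of whose intermediate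
vertices are internal (the first and last vertex may coincide). -/
def IsInternalPath (G : MGraph) (es : List G.E) : Prop :=
  es ≠ [] ∧ G.IsWalk es ∧
  (∀ v ∈ (G.walkVerts es).tail.dropLast, G.Internal v) ∧
  (G.walkVerts es).tail.Nodup ∧ (G.walkVerts es).dropLast.Nodup

/-- A segment: a maximal one-way internal path. -/
def IsSegment (G : MGraph) (es : List G.E) : Prop :=
  G.IsInternalPath es ∧ (∀ e, ¬ G.IsInternalPath (e :: es)) ∧
  (∀ e, ¬ G.IsInternalPath (es ++ [e]))

def firstV (G : MGraph) (es : List G.E) : Option G.V := es.head?.map G.src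

def lastV (G : MGraph) (es : List G.E) : Option G.V := es.getLast?.map G.tgt

end MGraph

/-- The number of segments of a multigraph, counting segments as sets of edges. -/
noncomputable def segCount (G : MGraph) : ℕ :=
  {S : Set G.E | ∃ es, G.IsSegment es ∧ S = {e | e ∈ es}}.ncard

/-- Isomorphism of directed multigraphs. -/
def IsIso (G H : MGraph) : Prop :=
  ∃ (fV : G.V → H.V) (fE : G.E → H.E),
    Function.Bijective fV ∧ Function.Bijective fE ∧
    (∀ e, H.src (fE e) = fV (G.src e)) ∧ (∀ e, H.tgt (fE e) = fV (G.tgt e))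

/-- `H` is obtained from `G` by deleting one edge. -/
def IsEdgeDeletion (G H : MGraph) : Prop :=
  ∃ (e₀ : G.E) (f : G.V → H.V) (g : {e : G.E // e ≠ e₀} → H.E),
    Function.Bijective f ∧ Function.Bijective g ∧
    (∀ e, H.src (g e) = f (G.src e.1)) ∧ (∀ e, H.tgt (g e) = f (G.tgt e.1))

/-- `H` is obtained from `G` by deleting one vertex and all its incident edges. -/
def IsVertexDeletion (G H : MGraph) : Prop :=
  ∃ (v₀ : G.V) (f : {v : G.V // v ≠ v₀} → H.V)
    (g : {e : G.E // G.src e ≠ v₀ ∧ G.tgt e ≠ v₀} → H.E),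
    Function.Bijective f ∧ Function.Bijective g ∧
    (∀ e, H.src (g e) = f ⟨G.src e.1, e.2.1⟩) ∧ (∀ e, H.tgt (g e) = f ⟨G.tgt e.1, e.2.2⟩)

/-- `H` is obtained from `G` by contracting the edge `e₀`
(identifying its two endpoints and removing the edge). -/
def IsEdgeContractionAt (G H : MGraph) (e₀ : G.E) : Prop :=
  ∃ (f : G.V → H.V) (g : {e : G.E // e ≠ e₀} → H.E),
    Function.Surjective f ∧ Function.Bijective g ∧
    (∀ u v, f u = f v ↔
      (u = v ∨ (u = G.src e₀ ∧ v = G.tgt e₀) ∨ (u = G.tgt e₀ ∧ v = G.src e₀))) ∧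
    (∀ e, H.src (g e) = f (G.src e.1)) ∧ (∀ e, H.tgt (g e) = f (G.tgt e.1))

def IsEdgeContraction (G H : MGraph) : Prop := ∃ e₀, IsEdgeContractionAt G H e₀

def MinorStep (G H : MGraph) : Prop :=
  IsIso G H ∨ IsEdgeDeletion G H ∨ IsVertexDeletion G H ∨ IsEdgeContraction G H

/-- `H` is a minor of `G`: obtained by a sequence of edge deletions,
vertex deletions and edge contractions (up to isomorphism). -/
def IsMinorOf (H G : MGraph) : Prop := Relation.ReflTransGen MinorStep G H

/-- A conjunctive regular path query: a finite directed multigraph whose edges (atoms)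
are labelled by languages, with a tuple of output variables. -/
structure CRPQ (A : Type) (n : ℕ) where
  V : Type
  I : Type
  finV : Finite V
  finI : Finite I
  src : I → V
  tgt : I → V
  lang : I → Set (List A)
  out : Fin n → V

/-- Satisfaction of a CRPQ on a database at an output tuple. -/
def CRPQ.sat {A : Type} {n : ℕ} (γ : CRPQ A n) (G : DB A) (t : Fin n → G.V) : Prop :=
  ∃ h : γ.V → G.V, (∀ k, h (γ.out k) = t k) ∧
    ∀ i, ∃ w ∈ γ.lang i, G.path w (h (γ.src i)) (h (γ.tgt i))

/-- A choice of expansion words: one word from each atom language. -/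
def CRPQ.IsExpansionWords {A : Type} {n : ℕ} (γ : CRPQ A n) (w : γ.I → List A) : Prop :=
  ∀ i, w i ∈ γ.lang i

/-- Satisfaction of the expansion of `γ` determined by the words `w`. -/
def CRPQ.expSat {A : Type} {n : ℕ} (γ : CRPQ A n) (w : γ.I → List A) (G : DB A)
    (t : Fin n → G.V) : Prop :=
  ∃ h : γ.V → G.V, (∀ k, h (γ.out k) = t k) ∧ ∀ i, G.path (w i) (h (γ.src i)) (h (γ.tgt i))

/-- A CQ is a CRPQ all of whose atom languages are single-letter singletons. -/
def CRPQ.IsCQ {A : Type} {n : ℕ} (η : CRPQ A n) : Prop := ∀ i, ∃ a : A, η.lang i = {[a]}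

/-- Vertices of the expansion of `γ` along `w`, before identifying endpoints of
empty-word atoms: original variables plus fresh intermediate path variables. -/
def CanonBase {A : Type} {n : ℕ} (γ : CRPQ A n) (w : γ.I → List A) : Type :=
  γ.V ⊕ (Σ i : γ.I, Fin ((w i).length - 1))

/-- The `k`-th vertex on the expansion path of atom `i`. -/
def nodeAt {A : Type} {n : ℕ} (γ : CRPQ A n) (w : γ.I → List A) (i : γ.I) (k : ℕ) :
    CanonBase γ w :=
  if h : 0 < k ∧ k < (w i).length then Sum.inr ⟨i, ⟨k - 1, by omega⟩⟩
  else if k = 0 then Sum.inl (γ.src i) else Sum.inl (γ.tgt i)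

/-- Identifications forced by empty-word atoms. -/
def canonRel {A : Type} {n : ℕ} (γ : CRPQ A n) (w : γ.I → List A) :
    CanonBase γ w → CanonBase γ w → Prop :=
  fun u v => ∃ i, w i = [] ∧ u = Sum.inl (γ.src i) ∧ v = Sum.inl (γ.tgt i)

/-- The canonical database of the expansion of `γ` along the words `w`. -/
def canonDB {A : Type} {n : ℕ} (γ : CRPQ A n) (w : γ.I → List A) : DB A where
  V := Quot (canonRel γ w)
  edge u a v := ∃ (i : γ.I) (k : ℕ) (hk : k < (w i).length),
    (w i).get ⟨k, hk⟩ = a ∧ u = Quot.mk _ (nodeAt γ w i k) ∧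
      v = Quot.mk _ (nodeAt γ w i (k + 1))

/-- The canonical output tuple of the canonical database. -/
def canonOut {A : Type} {n : ℕ} (γ : CRPQ A n) (w : γ.I → List A) :
    Fin n → (canonDB γ w).V :=
  fun k => Quot.mk (canonRel γ w) (Sum.inl (γ.out k))

/-- A labelled CQ: a finite directed multigraph with letter-labelled edges and outputs. -/
structure LCQ (A : Type) (n : ℕ) where
  V : Type
  E : Type
  finV : Finite V
  finE : Finite E
  src : E → V
  tgt : E → V
  lab : E → A
  out : Fin n → V

/-- A homomorphism of labelled CQs: preserves edges, labels and outputs pointwise. -/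
def LCQHom {A : Type} {n : ℕ} (P Q : LCQ A n) (fV : P.V → Q.V) (fE : P.E → Q.E) : Prop :=
  (∀ e, Q.src (fE e) = fV (P.src e)) ∧ (∀ e, Q.tgt (fE e) = fV (P.tgt e)) ∧
  (∀ e, Q.lab (fE e) = P.lab e) ∧ (∀ k, fV (P.out k) = Q.out k)

def LCQ.HomTo {A : Type} {n : ℕ} (P Q : LCQ A n) : Prop := ∃ fV fE, LCQHom P Q fV fE

def HomEquiv {A : Type} {n : ℕ} (P Q : LCQ A n) : Prop := P.HomTo Q ∧ Q.HomTo P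

/-- `C` is a core of `P`: hom-equivalent to `P`, and every endomorphism of `C`
is an automorphism. -/
def IsCoreOf {A : Type} {n : ℕ} (C P : LCQ A n) : Prop :=
  HomEquiv C P ∧
    ∀ fV fE, LCQHom C C fV fE → Function.Bijective fV ∧ Function.Bijective fE

/-- The expansion of `γ` along the words `w`, as a labelled CQ. -/
def expLCQ {A : Type} {n : ℕ} (γ : CRPQ A n) (w : γ.I → List A) : LCQ A n where
  V := Quot (canonRel γ w)
  E := Σ i : γ.I, Fin ((w i).length)
  finV := by
    haveI := γ.finV; haveI := γ.finI
    haveI : Finite (CanonBase γ w) := by unfold CanonBase; infer_instance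
    exact Finite.of_surjective (Quot.mk (canonRel γ w))
      (fun q => Quot.inductionOn q fun a => ⟨a, rfl⟩)
  finE := by haveI := γ.finI; infer_instance
  src e := Quot.mk _ (nodeAt γ w e.1 e.2.1)
  tgt e := Quot.mk _ (nodeAt γ w e.1 (e.2.1 + 1))
  lab e := (w e.1).get e.2
  out k := Quot.mk _ (Sum.inl (γ.out k))

/-- The underlying multigraph of a labelled CQ. -/
def LCQ.toMGraph {A : Type} {n : ℕ} (P : LCQ A n) : MGraph :=
  ⟨P.V, P.E, P.src, P.tgt, Set.range P.out⟩

/-- The underlying multigraph of a CRPQ. -/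
def CRPQ.toMGraph {A : Type} {n : ℕ} (γ : CRPQ A n) : MGraph :=
  ⟨γ.V, γ.I, γ.src, γ.tgt, Set.range γ.out⟩

/-- The maximum number of atoms of a disjunct of a union of CRPQs. -/
noncomputable def maxAtoms {A : Type} {n : ℕ} (Γ : List (CRPQ A n)) : ℕ :=
  (Γ.map fun γ => Nat.card γ.I).foldr max 0

/-- Concatenation of languages. -/
def Lconcat {A : Type} (L L' : Set (List A)) : Set (List A) :=
  {w | ∃ u ∈ L, ∃ v ∈ L', w = u ++ v}

open Classical in
/-- Contraction of the internal variable `γ.tgt i₁`: the consecutive atoms `i₁, i₂`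
are replaced by a single atom labelled by the concatenated language, and the
internal variable is removed. -/
noncomputable def contractAt {A : Type} {n : ℕ} (γ : CRPQ A n) (i₁ i₂ : γ.I)
    (hne : i₁ ≠ i₂)
    (hout : ∀ k, γ.out k ≠ γ.tgt i₁)
    (hin : ∀ j, γ.tgt j = γ.tgt i₁ → j = i₁)
    (hsrc : ∀ j, γ.src j = γ.tgt i₁ → j = i₂) : CRPQ A n where
  V := {v : γ.V // v ≠ γ.tgt i₁}
  I := {i : γ.I // i ≠ i₂}
  finV := by haveI := γ.finV; infer_instance
  finI := by haveI := γ.finI; infer_instance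
  src i := ⟨γ.src i.1, fun h => i.2 (hsrc i.1 h)⟩
  tgt i :=
    if h : i.1 = i₁ then ⟨γ.tgt i₂, fun hc => hne (hin i₂ hc).symm⟩
    else ⟨γ.tgt i.1, fun hc => h (hin i.1 hc)⟩
  lang i := if i.1 = i₁ then Lconcat (γ.lang i₁) (γ.lang i₂) else γ.lang i.1
  out k := ⟨γ.out k, hout k⟩

/-- Isomorphism of CRPQs. -/
def CRPQIso {A : Type} {n : ℕ} (γ δ : CRPQ A n) : Prop :=
  ∃ (fV : γ.V → δ.V) (fI : γ.I → δ.I),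
    Function.Bijective fV ∧ Function.Bijective fI ∧
    (∀ i, δ.src (fI i) = fV (γ.src i)) ∧ (∀ i, δ.tgt (fI i) = fV (γ.tgt i)) ∧
    (∀ i, δ.lang (fI i) = γ.lang i) ∧ (∀ k, fV (γ.out k) = δ.out k)

/-- One contraction step on CRPQs (up to isomorphism). -/
def ContractStep {A : Type} {n : ℕ} (γ γ' : CRPQ A n) : Prop :=
  ∃ (i₁ i₂ : γ.I) (hne : i₁ ≠ i₂) (_ : γ.tgt i₁ = γ.src i₂)
    (hout : ∀ k, γ.out k ≠ γ.tgt i₁)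
    (hin : ∀ j, γ.tgt j = γ.tgt i₁ → j = i₁)
    (hsrc : ∀ j, γ.src j = γ.tgt i₁ → j = i₂),
    CRPQIso γ' (contractAt γ i₁ i₂ hne hout hin hsrc)

/-- The maximal under-approximation of `Γ` over the graph class `𝒞`: all CRPQs with
underlying graph in `𝒞` which are contractions of some CQ receiving a homomorphism
from some expansion of `Γ`. -/
def App {A : Type} {n : ℕ} (Γ : List (CRPQ A n)) (𝒞 : MGraph → Prop) :
    Set (CRPQ A n) :=
  {α | 𝒞 α.toMGraph ∧ ∃ γ ∈ Γ, ∃ w, γ.IsExpansionWords w ∧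
    ∃ η : CRPQ A n, η.IsCQ ∧
      (∃ u, η.IsExpansionWords u ∧ (expLCQ γ w).HomTo (expLCQ η u)) ∧
      Relation.ReflTransGen ContractStep η α}

/-! ### Auxiliary lemmas -/

section PathLemmas

variable {A : Type}

lemma DB.path_of_fun (G : DB A) : ∀ (w : List A) (f : ℕ → G.V),
    (∀ k (h : k < w.length), G.edge (f k) (w.get ⟨k, h⟩) (f (k+1))) →
    G.path w (f 0) (f w.length)
  | [], _, _ => rfl
  | a :: w, f, he => by
    refine ⟨f 1, he 0 (by simp), ?_⟩
    have := DB.path_of_fun G w (fun k => f (k+1))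
      (fun k h => by simpa using he (k+1) (by simpa using Nat.succ_lt_succ h))
    simpa using this

lemma DB.fun_of_path (G : DB A) : ∀ (w : List A) (u v : G.V), G.path w u v →
    ∃ f : ℕ → G.V, f 0 = u ∧ f w.length = v ∧
      ∀ k (h : k < w.length), G.edge (f k) (w.get ⟨k, h⟩) (f (k+1))
  | [], u, v, h => ⟨fun _ => u, rfl, h ▸ rfl, by intro k hk; simp at hk⟩
  | a :: w, u, v, h => by
    obtain ⟨x, hx, hp⟩ := h
    obtain ⟨f', h0, hn, he⟩ := DB.fun_of_path G w x v hp
    refine ⟨fun k => match k with | 0 => u | k+1 => f' k, rfl, hn, ?_⟩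
    intro k hk
    match k with
    | 0 => simpa [h0] using hx
    | k+1 => simpa using he k (by simpa using hk)

lemma DB.path_append_split (G : DB A) : ∀ (u v : List A) (x z : G.V),
    G.path (u ++ v) x z → ∃ b, G.path u x b ∧ G.path v b z
  | [], v, x, z, h => ⟨x, rfl, h⟩
  | a :: u, v, x, z, h => by
    obtain ⟨y, hy, hp⟩ := h
    obtain ⟨b, h1, h2⟩ := DB.path_append_split G u v y z hp
    exact ⟨b, ⟨y, hy, h1⟩, h2⟩

end PathLemmas

section SatLemmas

variable {A : Type} {n : ℕ}

/-- Satisfaction of a labelled CQ in a database. -/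
def LCQ.satDB (P : LCQ A n) (G : DB A) (t : Fin n → G.V) : Prop :=
  ∃ f : P.V → G.V, (∀ e, G.edge (f (P.src e)) (P.lab e) (f (P.tgt e))) ∧
    ∀ k, f (P.out k) = t k

lemma satDB_of_homTo {P Q : LCQ A n} {G : DB A} {t : Fin n → G.V}
    (h : P.HomTo Q) (hs : Q.satDB G t) : P.satDB G t := by
  obtain ⟨fV, fE, h1, h2, h3, h4⟩ := h
  obtain ⟨f, hf, ht⟩ := hs
  refine ⟨fun v => f (fV v), fun e => ?_, fun k => ?_⟩
  case refine_2 => show f (fV (P.out k)) = t k; rw [h4 k]; exact ht k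
  have := hf (fE e)
  rwa [h1, h2, h3] at this

lemma expSat_satDB {γ : CRPQ A n} {w : γ.I → List A} {G : DB A} {t : Fin n → G.V}
    (h : γ.expSat w G t) : (expLCQ γ w).satDB G t := by
  obtain ⟨h0, hout, hpath⟩ := h
  choose f hf0 hfn hfe using fun i => G.fun_of_path (w i) _ _ (hpath i)
  let base : CanonBase γ w → G.V := fun x => match x with
    | Sum.inl v => h0 v
    | Sum.inr ⟨i, k⟩ => f i (k.1 + 1)
  have hbase : ∀ i k, k ≤ (w i).length → base (nodeAt γ w i k) = f i k := by
    intro i k hk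
    unfold nodeAt CanonBase
    split_ifs with h1 h2
    · show f i (k - 1 + 1) = f i k
      congr 1; omega
    · subst h2; exact (hf0 i).symm
    · have hk' : k = (w i).length := by omega
      subst hk'
      exact (hfn i).symm
  have hrel : ∀ a b, canonRel γ w a b → base a = base b := by
    rintro a b ⟨i, hnil, rfl, rfl⟩
    have := hpath i
    rw [hnil] at this
    exact this
  refine ⟨Quot.lift base hrel, ?_, fun k => hout k⟩
  rintro ⟨i, k⟩
  show G.edge (base (nodeAt γ w i k.1)) ((w i).get k) (base (nodeAt γ w i (k.1+1)))
  rw [hbase i k.1 (le_of_lt k.2), hbase i (k.1+1) k.2]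
  exact hfe i k.1 k.2

lemma satDB_expSat {γ : CRPQ A n} {w : γ.I → List A} {G : DB A} {t : Fin n → G.V}
    (h : (expLCQ γ w).satDB G t) : γ.expSat w G t := by
  obtain ⟨f, hf, ht⟩ := h
  refine ⟨fun v => f (Quot.mk _ (Sum.inl v)), ht, ?_⟩
  intro i
  have h0 : nodeAt γ w i 0 = Sum.inl (γ.src i) := by
    unfold nodeAt CanonBase; simp
  rcases Nat.eq_zero_or_pos (w i).length with hl | hl
  · have hnil : w i = [] := List.length_eq_zero_iff.mp hl
    rw [hnil]
    exact congrArg f (Quot.sound ⟨i, hnil, rfl, rfl⟩)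
  · have key := G.path_of_fun (w i) (fun k => f (Quot.mk _ (nodeAt γ w i k)))
      (fun k hk => hf ⟨i, ⟨k, hk⟩⟩)
    have hn : nodeAt γ w i (w i).length = Sum.inl (γ.tgt i) := by
      unfold nodeAt CanonBase; rw [dif_neg (by omega), if_neg (by omega)]
    have key' : G.path (w i) (f (Quot.mk _ (nodeAt γ w i 0)))
        (f (Quot.mk _ (nodeAt γ w i (w i).length))) := key
    rw [h0, hn] at key'
    exact key'

lemma sat_of_expSat {γ : CRPQ A n} {w : γ.I → List A} {G : DB A} {t : Fin n → G.V}
    (hw : γ.IsExpansionWords w) (h : γ.expSat w G t) : γ.sat G t := by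
  obtain ⟨h0, ho, hp⟩ := h
  exact ⟨h0, ho, fun i => ⟨w i, hw i, hp i⟩⟩

lemma expSat_of_sat_CQ {η : CRPQ A n} (hCQ : η.IsCQ) {u : η.I → List A}
    (hu : η.IsExpansionWords u) {G : DB A} {t : Fin n → G.V}
    (h : η.sat G t) : η.expSat u G t := by
  obtain ⟨h0, ho, hp⟩ := h
  refine ⟨h0, ho, fun i => ?_⟩
  obtain ⟨a, ha⟩ := hCQ i
  obtain ⟨v, hv, hpath⟩ := hp i
  have h1 : v = [a] := by rw [ha] at hv; simpa using hv
  have h2 : u i = [a] := by have := hu i; rw [ha] at this; simpa using this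
  rw [h2, ← h1]; exact hpath

lemma sat_of_iso {γ' δ : CRPQ A n} (h : CRPQIso γ' δ) {G : DB A} {t : Fin n → G.V}
    (hs : γ'.sat G t) : δ.sat G t := by
  obtain ⟨fV, fI, hbV, hbI, hsrc, htgt, hlang, hout⟩ := h
  obtain ⟨h0, ho, hp⟩ := hs
  have hgl : ∀ x, Function.surjInv hbV.2 (fV x) = x :=
    fun x => hbV.1 (Function.surjInv_eq hbV.2 _)
  refine ⟨fun v => h0 (Function.surjInv hbV.2 v), fun k => ?_, fun j => ?_⟩
  · show h0 (Function.surjInv hbV.2 (δ.out k)) = t k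
    rw [← hout k, hgl]; exact ho k
  obtain ⟨word, hw, hpath⟩ := hp (Function.surjInv hbI.2 j)
  have hj : fI (Function.surjInv hbI.2 j) = j := Function.surjInv_eq hbI.2 j
  refine ⟨word, ?_, ?_⟩
  · rw [← hj, hlang]; exact hw
  · show G.path word (h0 (Function.surjInv hbV.2 (δ.src j)))
      (h0 (Function.surjInv hbV.2 (δ.tgt j)))
    rw [← hj, hsrc, htgt, hgl, hgl]; exact hpath

lemma contractAt_sat {γ : CRPQ A n} {i₁ i₂ : γ.I} {hne : i₁ ≠ i₂}
    {hout : ∀ k, γ.out k ≠ γ.tgt i₁}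
    {hin : ∀ j, γ.tgt j = γ.tgt i₁ → j = i₁}
    {hsrc : ∀ j, γ.src j = γ.tgt i₁ → j = i₂}
    (htgt : γ.tgt i₁ = γ.src i₂) {G : DB A} {t : Fin n → G.V}
    (hs : (contractAt γ i₁ i₂ hne hout hin hsrc).sat G t) : γ.sat G t := by
  classical
  obtain ⟨h0, ho, hp⟩ := hs
  have hs1 : γ.src i₁ ≠ γ.tgt i₁ := fun h => hne (hsrc i₁ h)
  have ht2 : γ.tgt i₂ ≠ γ.tgt i₁ := fun h => hne.symm (hin i₂ h)
  obtain ⟨word, hword, hpath⟩ := hp ⟨i₁, hne⟩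
  have hlang : (contractAt γ i₁ i₂ hne hout hin hsrc).lang ⟨i₁, hne⟩ =
      Lconcat (γ.lang i₁) (γ.lang i₂) := by
    simp [contractAt]
  have htgteq : (contractAt γ i₁ i₂ hne hout hin hsrc).tgt ⟨i₁, hne⟩ =
      ⟨γ.tgt i₂, fun hc => hne ((hin i₂ hc).symm)⟩ := by
    simp [contractAt]
  rw [hlang] at hword
  obtain ⟨uu, huu, vv, hvv, hw⟩ := hword
  subst hw
  rw [htgteq] at hpath
  obtain ⟨b, hb1, hb2⟩ := G.path_append_split uu vv _ _ hpath
  refine ⟨fun v => if hv : v = γ.tgt i₁ then b else h0 ⟨v, hv⟩, ?_, ?_⟩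
  · intro k
    show (if hv : γ.out k = γ.tgt i₁ then b else h0 ⟨γ.out k, hv⟩) = t k
    rw [dif_neg (hout k)]
    exact ho k
  · intro j
    by_cases hj1 : j = i₁
    · subst hj1
      refine ⟨uu, huu, ?_⟩
      show G.path uu (if hv : γ.src j = γ.tgt j then b else h0 ⟨γ.src j, hv⟩)
        (if hv : γ.tgt j = γ.tgt j then b else h0 ⟨γ.tgt j, hv⟩)
      rw [dif_neg hs1, dif_pos rfl]
      exact hb1
    · by_cases hj2 : j = i₂
      · subst hj2
        refine ⟨vv, hvv, ?_⟩
        show G.path vv (if hv : γ.src j = γ.tgt i₁ then b else h0 ⟨γ.src j, hv⟩)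
          (if hv : γ.tgt j = γ.tgt i₁ then b else h0 ⟨γ.tgt j, hv⟩)
        rw [dif_pos htgt.symm, dif_neg ht2]
        exact hb2
      · have hsj : γ.src j ≠ γ.tgt i₁ := fun h => hj2 (hsrc j h)
        have htj : γ.tgt j ≠ γ.tgt i₁ := fun h => hj1 (hin j h)
        obtain ⟨word, hword, hpath⟩ := hp ⟨j, hj2⟩
        have hlj : (contractAt γ i₁ i₂ hne hout hin hsrc).lang ⟨j, hj2⟩ = γ.lang j := by
          simp [contractAt, hj1]
        have htje : (contractAt γ i₁ i₂ hne hout hin hsrc).tgt ⟨j, hj2⟩ =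
            ⟨γ.tgt j, fun hc => hj1 (hin j hc)⟩ := by
          simp [contractAt, hj1]
        rw [hlj] at hword
        rw [htje] at hpath
        refine ⟨word, hword, ?_⟩
        show G.path word (if hv : γ.src j = γ.tgt i₁ then b else h0 ⟨γ.src j, hv⟩)
          (if hv : γ.tgt j = γ.tgt i₁ then b else h0 ⟨γ.tgt j, hv⟩)
        rw [dif_neg hsj, dif_neg htj]
        exact hpath

lemma ContractStep.sat {γ γ' : CRPQ A n} (h : ContractStep γ γ') {G : DB A}
    {t : Fin n → G.V} (hs : γ'.sat G t) : γ.sat G t := by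
  obtain ⟨i₁, i₂, hne, htgt, hout, hin, hsrc, hiso⟩ := h
  exact contractAt_sat htgt (sat_of_iso hiso hs)

lemma contract_chain_sat {η α : CRPQ A n} (h : Relation.ReflTransGen ContractStep η α)
    {G : DB A} {t : Fin n → G.V} (hs : α.sat G t) : η.sat G t := by
  induction h with
  | refl => exact hs
  | tail _ hstep ih => exact ih (hstep.sat hs)

end SatLemmas


section PartQ

variable {A : Type} {n : ℕ}

/-- Identifications of endpoints of empty-partition atoms. -/
def qrel (α : CRPQ A n) (p : α.I → List (List A)) : α.V → α.V → Prop :=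
  fun u v => ∃ i, p i = [] ∧ u = α.src i ∧ v = α.tgt i

/-- Vertices of the partial expansion of `α` along the partitions `p`. -/
abbrev pVert (α : CRPQ A n) (p : α.I → List (List A)) : Type :=
  Quot (qrel α p) ⊕ (Σ i : α.I, Fin ((p i).length - 1))

/-- The `k`-th vertex on the path of atom `i` in the partial expansion. -/
def pnode (α : CRPQ A n) (p : α.I → List (List A)) (i : α.I) (k : ℕ) : pVert α p :=
  if h : 0 < k ∧ k < (p i).length then Sum.inr ⟨i, ⟨k - 1, by omega⟩⟩
  else if k = 0 then Sum.inl (Quot.mk _ (α.src i)) else Sum.inl (Quot.mk _ (α.tgt i))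

lemma pnode_zero (α : CRPQ A n) (p : α.I → List (List A)) (i : α.I) :
    pnode α p i 0 = Sum.inl (Quot.mk _ (α.src i)) := by
  unfold pnode pVert; simp

lemma pnode_last (α : CRPQ A n) (p : α.I → List (List A)) (i : α.I) (k : ℕ)
    (h1 : k ≠ 0) (h2 : (p i).length ≤ k) :
    pnode α p i k = Sum.inl (Quot.mk _ (α.tgt i)) := by
  unfold pnode pVert; rw [dif_neg (by omega), if_neg h1]

lemma pnode_mid (α : CRPQ A n) (p : α.I → List (List A)) (i : α.I) (k : ℕ)
    (h1 : 0 < k) (h2 : k < (p i).length) :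
    pnode α p i k = Sum.inr ⟨i, ⟨k - 1, by omega⟩⟩ := dif_pos ⟨h1, h2⟩

/-- The partial expansion of `α` along the partitions `p`. -/
noncomputable def partQ (α : CRPQ A n) (p : α.I → List (List A)) : CRPQ A n where
  V := pVert α p
  I := Σ i : α.I, Fin (p i).length
  finV := by
    haveI := α.finV; haveI := α.finI
    haveI : Finite (Quot (qrel α p)) :=
      Finite.of_surjective (Quot.mk _) (fun q => Quot.inductionOn q fun a => ⟨a, rfl⟩)
    unfold pVert; infer_instance
  finI := by haveI := α.finI; infer_instance
  src e := pnode α p e.1 e.2.1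
  tgt e := pnode α p e.1 (e.2.1 + 1)
  lang e := {(p e.1).get e.2}
  out k := Sum.inl (Quot.mk _ (α.out k))

/-- The database induced by a CRPQ, with an edge for each single-letter
word in an atom language. -/
def dbOf (P : CRPQ A n) : DB A :=
  ⟨P.V, fun x a y => ∃ i, P.src i = x ∧ P.tgt i = y ∧ [a] ∈ P.lang i⟩

/-- The singleton-blocks partition. -/
def sing (w : List A) : List (List A) := w.map (fun a => [a])

@[simp] lemma sing_length (w : List A) : (sing w).length = w.length := by
  simp [sing]

lemma sing_get (w : List A) (k : ℕ) (hk : k < w.length) :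
    (sing w).get ⟨k, by simpa using hk⟩ = [w.get ⟨k, hk⟩] := by
  simp [sing]

lemma partQ_sing_isCQ (α : CRPQ A n) (w : α.I → List A) :
    (partQ α (fun i => sing (w i))).IsCQ := by
  rintro ⟨i, k⟩
  refine ⟨(w i).get ⟨k.1, by simpa using k.2⟩, ?_⟩
  show ({(sing (w i)).get k} : Set (List A)) = _
  rw [show (sing (w i)).get k = [(w i).get ⟨k.1, by simpa using k.2⟩] from sing_get _ _ _]

/-- `α` is satisfied in the database of its singleton partial expansion. -/
lemma partQ_sat_dbOf (α : CRPQ A n) (w : α.I → List A) (hw : α.IsExpansionWords w) :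
    α.sat (dbOf (partQ α (fun i => sing (w i))))
      (fun k => (partQ α (fun i => sing (w i))).out k) := by
  set p : α.I → List (List A) := fun i => sing (w i) with hp
  refine ⟨fun v => Sum.inl (Quot.mk _ v), fun k => rfl, fun i => ?_⟩
  refine ⟨w i, hw i, ?_⟩
  have hlen : (p i).length = (w i).length := by simp [hp]
  have key := (dbOf (partQ α p)).path_of_fun (w i) (fun k => pnode α p i k) ?_
  · rcases Nat.eq_zero_or_pos (w i).length with hl | hl
    · have hnil : w i = [] := List.length_eq_zero_iff.mp hl
      rw [hnil]
      show (Sum.inl (Quot.mk _ (α.src i)) : pVert α p) = Sum.inl (Quot.mk _ (α.tgt i))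
      exact congrArg Sum.inl (Quot.sound ⟨i, by simp [hp, hnil, sing], rfl, rfl⟩)
    · have h0 : pnode α p i 0 = Sum.inl (Quot.mk _ (α.src i)) := pnode_zero _ _ _
      have hn : pnode α p i (w i).length = Sum.inl (Quot.mk _ (α.tgt i)) :=
        pnode_last _ _ _ _ (by omega) (by omega)
      rw [h0, hn] at key
      exact key
  · intro k hk
    refine ⟨⟨i, ⟨k, by omega⟩⟩, rfl, rfl, ?_⟩
    show [(w i).get ⟨k, hk⟩] ∈ ({(p i).get ⟨k, by omega⟩} : Set (List A))
    rw [show (p i).get ⟨k, by omega⟩ = [(w i).get ⟨k, hk⟩] from sing_get _ _ _]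
    exact rfl

/-- From satisfaction of `γ` in the database of a CQ `η` with one-letter atoms,
extract expansion words for `γ` and a homomorphism of expansions. -/
lemma hom_of_sat_dbOf (η : CRPQ A n) (u : η.I → List A)
    (hu : η.IsExpansionWords u) (hlen : ∀ e, (u e).length = 1)
    (hlab : ∀ e a, [a] ∈ η.lang e → u e = [a])
    (γ : CRPQ A n) (hsat : γ.sat (dbOf η) (fun k => η.out k)) :
    ∃ w', γ.IsExpansionWords w' ∧ (expLCQ γ w').HomTo (expLCQ η u) := by
  classical
  obtain ⟨hγ, ho, hpz⟩ := hsat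
  choose w' hw' hpath using hpz
  refine ⟨w', hw', ?_⟩
  choose vf hvf0 hvfn hvfe using fun i => (dbOf η).fun_of_path (w' i) _ _ (hpath i)
  choose E hE1 hE2 hE3 using fun i k (hk : k < (w' i).length) => hvfe i k hk
  let base : CanonBase γ w' → (expLCQ η u).V := fun x => match x with
    | Sum.inl v => Quot.mk _ (Sum.inl (hγ v))
    | Sum.inr ⟨i, k⟩ => Quot.mk _ (Sum.inl (vf i (k.1 + 1)))
  have hresp : ∀ a b, canonRel γ w' a b → base a = base b := by
    rintro a b ⟨i, hnil, rfl, rfl⟩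
    have := hpath i
    rw [hnil] at this
    exact congrArg (fun z => Quot.mk _ (Sum.inl z)) this
  have key : ∀ i k, k ≤ (w' i).length →
      base (nodeAt γ w' i k) = Quot.mk _ (Sum.inl (vf i k)) := by
    intro i k hk
    unfold nodeAt CanonBase
    split_ifs with h1 h2
    · show Quot.mk _ (Sum.inl (vf i (k - 1 + 1))) = _
      have he : k - 1 + 1 = k := by omega
      rw [he]
    · subst h2
      exact congrArg (fun z => Quot.mk _ (Sum.inl z)) (hvf0 i).symm
    · have hnlt : ¬ k < (w' i).length := fun hlt => h1 ⟨by omega, hlt⟩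
      have hk' : k = (w' i).length := by omega
      subst hk'
      exact congrArg (fun z => Quot.mk _ (Sum.inl z)) (hvfn i).symm
  refine ⟨Quot.lift base hresp, fun e => ⟨E e.1 e.2.1 e.2.2, ⟨0, by rw [hlen]; omega⟩⟩,
    ?_, ?_, ?_, ?_⟩
  · rintro ⟨i, k⟩
    show Quot.mk _ (nodeAt η u (E i k.1 k.2) 0) = Quot.lift base hresp (Quot.mk _ (nodeAt γ w' i k.1))
    have hr : nodeAt η u (E i k.1 k.2) 0 = Sum.inl (η.src (E i k.1 k.2)) := by
      unfold nodeAt CanonBase; simp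
    rw [hr, hE1 i k.1 k.2]
    exact (key i k.1 (le_of_lt k.2)).symm
  · rintro ⟨i, k⟩
    show Quot.mk _ (nodeAt η u (E i k.1 k.2) 1) = Quot.lift base hresp (Quot.mk _ (nodeAt γ w' i (k.1 + 1)))
    have hr : nodeAt η u (E i k.1 k.2) 1 = Sum.inl (η.tgt (E i k.1 k.2)) := by
      unfold nodeAt CanonBase
      rw [dif_neg (by rw [hlen]; omega), if_neg (by omega)]
    rw [hr, hE2 i k.1 k.2]
    exact (key i (k.1 + 1) k.2).symm
  · rintro ⟨i, k⟩
    show (u (E i k.1 k.2)).get ⟨0, _⟩ = (w' i).get k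
    have := hlab _ _ (hE3 i k.1 k.2)
    simp [this]
  · intro k
    show Quot.lift base hresp (Quot.mk _ (Sum.inl (γ.out k))) = Quot.mk _ (Sum.inl (η.out k))
    exact congrArg (fun z => Quot.mk _ (Sum.inl z)) (ho k)

/-- Satisfaction of the fully-contracted query. -/
lemma partQ_final_sat (α : CRPQ A n) (w : α.I → List A) (p : α.I → List (List A))
    (hpe : ∀ i, w i = [] → p i = []) (hpne : ∀ i, w i ≠ [] → p i = [w i])
    {G : DB A} {t : Fin n → G.V}
    (h0 : α.V → G.V) (ho : ∀ k, h0 (α.out k) = t k)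
    (hpath : ∀ i, G.path (w i) (h0 (α.src i)) (h0 (α.tgt i))) :
    (partQ α p).sat G t := by
  classical
  have hresp : ∀ a b, qrel α p a b → h0 a = h0 b := by
    rintro a b ⟨i, hnil, rfl, rfl⟩
    have hwnil : w i = [] := by
      by_contra hc
      rw [hpne i hc] at hnil
      exact (List.cons_ne_nil _ _) hnil
    have := hpath i
    rw [hwnil] at this
    exact this
  refine ⟨fun v => match v with
    | Sum.inl q => Quot.lift h0 hresp q
    | Sum.inr ⟨i, _⟩ => h0 (α.src i), fun k => ho k, ?_⟩
  rintro ⟨i, k⟩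
  by_cases hwnil : w i = []
  · exfalso
    have hk := k.2
    have hlen0 : (p i).length = 0 := by rw [hpe i hwnil]; rfl
    omega
  · have hpi : p i = [w i] := hpne i hwnil
    have hlen1 : (p i).length = 1 := by rw [hpi]; rfl
    have hk0 : k.1 = 0 := by
      have hk := k.2
      omega
    refine ⟨(p i).get k, rfl, ?_⟩
    have hget : (p i).get k = w i := by
      rw [List.get_eq_getElem]
      simp [List.getElem_of_eq hpi, hk0]
    have hsrc : pnode α p i k.1 = Sum.inl (Quot.mk _ (α.src i)) := by
      rw [hk0]; exact pnode_zero _ _ _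
    have htgt : pnode α p i (k.1 + 1) = Sum.inl (Quot.mk _ (α.tgt i)) := by
      refine pnode_last _ _ _ _ (by omega) (by omega)
    show G.path ((p i).get k)
      ((fun v => match v with
        | Sum.inl q => Quot.lift h0 hresp q
        | Sum.inr ⟨i, _⟩ => h0 (α.src i)) (pnode α p i k.1))
      ((fun v => match v with
        | Sum.inl q => Quot.lift h0 hresp q
        | Sum.inr ⟨i, _⟩ => h0 (α.src i)) (pnode α p i (k.1 + 1)))
    rw [hget, hsrc, htgt]
    exact hpath i

end PartQ


section ContractChain

variable {A : Type} {n : ℕ}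

open Classical in
lemma contractAt_tgt_val (γ : CRPQ A n) (i₁ i₂ : γ.I) (hne : i₁ ≠ i₂)
    (hout : ∀ k, γ.out k ≠ γ.tgt i₁) (hin : ∀ j, γ.tgt j = γ.tgt i₁ → j = i₁)
    (hsrc : ∀ j, γ.src j = γ.tgt i₁ → j = i₂) (e : {i : γ.I // i ≠ i₂}) :
    ((contractAt γ i₁ i₂ hne hout hin hsrc).tgt e).val =
      if e.1 = i₁ then γ.tgt i₂ else γ.tgt e.1 := by
  simp only [contractAt]
  split_ifs <;> rfl

open Classical in
lemma contractAt_lang_eq (γ : CRPQ A n) (i₁ i₂ : γ.I) (hne : i₁ ≠ i₂)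
    (hout : ∀ k, γ.out k ≠ γ.tgt i₁) (hin : ∀ j, γ.tgt j = γ.tgt i₁ → j = i₁)
    (hsrc : ∀ j, γ.src j = γ.tgt i₁ → j = i₂) (e : {i : γ.I // i ≠ i₂}) :
    (contractAt γ i₁ i₂ hne hout hin hsrc).lang e =
      if e.1 = i₁ then Lconcat (γ.lang i₁) (γ.lang i₂) else γ.lang e.1 := by
  simp only [contractAt]

lemma Lconcat_single (x y : List A) : Lconcat {x} {y} = ({x ++ y} : Set (List A)) := by
  ext z
  simp [Lconcat]

set_option maxHeartbeats 1000000 in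
open Classical in
lemma partQ_contract_step (α : CRPQ A n) (p p' : α.I → List (List A)) (i₀ : α.I)
    (b₁ b₂ : List A) (rest : List (List A))
    (hsplit : p i₀ = b₁ :: b₂ :: rest) (hsplit' : p' i₀ = (b₁ ++ b₂) :: rest)
    (hother : ∀ j, j ≠ i₀ → p' j = p j) :
    ContractStep (partQ α p) (partQ α p') := by
  classical
  have hlen : (p i₀).length = rest.length + 2 := by rw [hsplit]; simp
  have hlen' : (p' i₀).length = rest.length + 1 := by rw [hsplit']; simp
  have hplen : ∀ j, j ≠ i₀ → (p' j).length = (p j).length := fun j hj => by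
    rw [hother j hj]
  have hnil_iff : ∀ i, p' i = [] ↔ p i = [] := by
    intro i
    by_cases h : i = i₀
    · subst h; rw [hsplit, hsplit']; simp
    · rw [hother i h]
  have hqimp : ∀ a b, qrel α p' a b → qrel α p a b := by
    rintro a b ⟨i, hnil, rfl, rfl⟩; exact ⟨i, (hnil_iff i).mp hnil, rfl, rfl⟩
  have hqimp' : ∀ a b, qrel α p a b → qrel α p' a b := by
    rintro a b ⟨i, hnil, rfl, rfl⟩; exact ⟨i, (hnil_iff i).mpr hnil, rfl, rfl⟩
  set qm : Quot (qrel α p') → Quot (qrel α p) :=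
    Quot.lift (Quot.mk _) (fun a b h => Quot.sound (hqimp a b h)) with hqm
  set qm' : Quot (qrel α p) → Quot (qrel α p') :=
    Quot.lift (Quot.mk _) (fun a b h => Quot.sound (hqimp' a b h)) with hqm'
  have hqm1 : ∀ x, qm' (qm x) = x := fun x => Quot.inductionOn x fun a => by
    rw [hqm, hqm']
  have htgt1 : pnode α p i₀ 1 = (Sum.inr ⟨i₀, ⟨0, by omega⟩⟩ : pVert α p) := by
    rw [pnode_mid α p i₀ 1 (by omega) (by omega)]
  set F : pVert α p' → pVert α p := fun x =>
    match x with
    | Sum.inl q => Sum.inl (qm q)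
    | Sum.inr ⟨j, m⟩ =>
      if h : j = i₀ then
        Sum.inr ⟨i₀, ⟨(m : ℕ) + 1, by
          have hb := m.2
          have h2 : (p' j).length = (p' i₀).length := by rw [h]
          omega⟩⟩
      else
        Sum.inr ⟨j, ⟨(m : ℕ), by
          have hb := m.2
          have h2 := hplen j h
          omega⟩⟩ with hF
  set EI : (Σ i : α.I, Fin (p' i).length) → (Σ i : α.I, Fin (p i).length) := fun e =>
    match e with
    | ⟨j, m⟩ =>
      if h : j = i₀ then
        if h0 : (m : ℕ) = 0 then ⟨i₀, ⟨0, by omega⟩⟩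
        else ⟨i₀, ⟨(m : ℕ) + 1, by
          have hb := m.2
          have h2 : (p' j).length = (p' i₀).length := by rw [h]
          omega⟩⟩
      else ⟨j, ⟨(m : ℕ), by
        have hb := m.2
        have h2 := hplen j h
        omega⟩⟩ with hEI
  have hFne : ∀ x, F x ≠ pnode α p i₀ 1 := by
    intro x h
    rw [htgt1] at h
    rcases x with q | ⟨j, m⟩
    · simp only [hF] at h
      simp at h
    · simp only [hF] at h
      split_ifs at h with hj
      · injection h with h'
        rw [Sigma.mk.inj_iff] at h'
        have h2 : (m : ℕ) + 1 = 0 := congrArg Fin.val (eq_of_heq h'.2)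
        omega
      · injection h with h'
        rw [Sigma.mk.inj_iff] at h'
        exact hj h'.1
  have hEIne : ∀ e, EI e ≠ (⟨i₀, ⟨1, by omega⟩⟩ : Σ i : α.I, Fin (p i).length) := by
    rintro ⟨j, m⟩ h
    simp only [hEI] at h
    split_ifs at h with hj h0
    · rw [Sigma.mk.inj_iff] at h
      have h2 : (0 : ℕ) = 1 := congrArg Fin.val (eq_of_heq h.2)
      omega
    · rw [Sigma.mk.inj_iff] at h
      have h2 : (m : ℕ) + 1 = 1 := congrArg Fin.val (eq_of_heq h.2)
      exact h0 (by omega)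
    · rw [Sigma.mk.inj_iff] at h
      exact hj h.1
  have KN : ∀ j k, k ≤ (p' j).length →
      F (pnode α p' j k) = pnode α p j (if j = i₀ ∧ 1 ≤ k then k + 1 else k) := by
    intro j k hk
    by_cases hj : j = i₀
    · replace hj := hj.symm
      subst hj
      rcases Nat.eq_zero_or_pos k with rfl | hk1
      · rw [if_neg (by omega), pnode_zero, pnode_zero]
        try simp only [hF, hqm]
        try rfl
      · rw [if_pos ⟨rfl, hk1⟩]
        by_cases hkl : k < (p' i₀).length
        · rw [pnode_mid α p' i₀ k hk1 hkl,
            pnode_mid α p i₀ (k + 1) (by omega) (by omega)]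
          simp only [hF]
          rw [dif_pos (by trivial)]
          exact congrArg Sum.inr (Sigma.ext rfl (heq_of_eq (Fin.ext
            (show k - 1 + 1 = k + 1 - 1 by omega))))
        · rw [pnode_last α p' i₀ k (by omega) (by omega),
            pnode_last α p i₀ (k + 1) (by omega) (by omega)]
          try simp only [hF, hqm]
          try rfl
    · rw [if_neg (by tauto)]
      have hpl := hplen j hj
      rcases Nat.eq_zero_or_pos k with rfl | hk1
      · rw [pnode_zero, pnode_zero]
        try simp only [hF, hqm]
        try rfl
      · by_cases hkl : k < (p' j).length
        · rw [pnode_mid α p' j k hk1 hkl, pnode_mid α p j k hk1 (by omega)]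
          simp only [hF]
          rw [dif_neg hj]
          try rfl
        · rw [pnode_last α p' j k (by omega) (by omega),
            pnode_last α p j k (by omega) (by omega)]
          try simp only [hF, hqm]
          try rfl
  have hpos0 : 0 < (p i₀).length := by omega
  have hpos1 : 1 < (p i₀).length := by omega
  set i₁ : (partQ α p).I := ⟨i₀, ⟨0, hpos0⟩⟩ with hi₁
  set i₂ : (partQ α p).I := ⟨i₀, ⟨1, hpos1⟩⟩ with hi₂
  have hne : i₁ ≠ i₂ := by
    rw [hi₁, hi₂]
    intro h
    erw [Sigma.mk.inj_iff] at h
    have h2 : (0 : ℕ) = 1 := congrArg Fin.val (eq_of_heq h.2)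
    omega
  have hout : ∀ k, (partQ α p).out k ≠ (partQ α p).tgt i₁ := by
    intro k
    show Sum.inl (Quot.mk _ (α.out k)) ≠ pnode α p i₀ 1
    rw [htgt1]
    simp
  have hin : ∀ j, (partQ α p).tgt j = (partQ α p).tgt i₁ → j = i₁ := by
    rintro ⟨j, m⟩ h
    have h' : pnode α p j ((m : ℕ) + 1) = pnode α p i₀ 1 := h
    rw [htgt1] at h'
    by_cases hm : (m : ℕ) + 1 < (p j).length
    · rw [pnode_mid α p j ((m : ℕ) + 1) (by omega) hm] at h'
      injection h' with h''
      rw [Sigma.mk.inj_iff] at h''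
      obtain ⟨hj, hfin⟩ := h''
      subst hj
      have hv : (m : ℕ) + 1 - 1 = 0 := congrArg Fin.val (eq_of_heq hfin)
      exact Sigma.mk.inj_iff.mpr ⟨rfl, heq_of_eq (Fin.ext
        (show (m : ℕ) = 0 by omega))⟩
    · unfold pnode pVert at h'
      rw [dif_neg (by omega)] at h'
      split_ifs at h' <;> simp at h'
  have hsrcc : ∀ j, (partQ α p).src j = (partQ α p).tgt i₁ → j = i₂ := by
    rintro ⟨j, m⟩ h
    have h' : pnode α p j (m : ℕ) = pnode α p i₀ 1 := h
    rw [htgt1] at h'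
    by_cases hm : 0 < (m : ℕ)
    · rw [pnode_mid α p j (m : ℕ) hm m.2] at h'
      injection h' with h''
      rw [Sigma.mk.inj_iff] at h''
      obtain ⟨hj, hfin⟩ := h''
      subst hj
      have hv : (m : ℕ) - 1 = 0 := congrArg Fin.val (eq_of_heq hfin)
      exact Sigma.mk.inj_iff.mpr ⟨rfl, heq_of_eq (Fin.ext
        (show (m : ℕ) = 1 by omega))⟩
    · have hm0 : (m : ℕ) = 0 := by omega
      rw [show (m : ℕ) = 0 from hm0, pnode_zero] at h'
      simp at h'
  refine ⟨i₁, i₂, hne, rfl, hout, hin, hsrcc, ?_⟩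
  · -- the isomorphism
    refine ⟨fun x => ⟨F x, hFne x⟩, fun e => ⟨EI e, hEIne e⟩, ⟨?_, ?_⟩, ⟨?_, ?_⟩,
      ?_, ?_, ?_, ?_⟩
    · -- fV injective
      intro x y hxy
      have hval : F x = F y := congrArg Subtype.val hxy
      rcases x with q | ⟨j, m⟩ <;> rcases y with q' | ⟨j', m'⟩ <;>
        simp only [hF] at hval
      · rw [Sum.inl.injEq] at hval
        have h2 : qm' (qm q) = qm' (qm q') := by rw [hval]
        rw [hqm1, hqm1] at h2
        rw [h2]
      · split_ifs at hval <;> simp at hval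
      · split_ifs at hval <;> simp at hval
      · split_ifs at hval with h1 h2 h2
        · injection hval with hv
          rw [Sigma.mk.inj_iff] at hv
          have hvv : (m : ℕ) + 1 = (m' : ℕ) + 1 := congrArg Fin.val (eq_of_heq hv.2)
          subst h1; subst h2
          exact congrArg Sum.inr (Sigma.mk.inj_iff.mpr ⟨rfl, heq_of_eq (Fin.ext
            (show (m : ℕ) = (m' : ℕ) by omega))⟩)
        · injection hval with hv
          rw [Sigma.mk.inj_iff] at hv
          exact absurd hv.1.symm h2
        · injection hval with hv
          rw [Sigma.mk.inj_iff] at hv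
          exact absurd hv.1 h1
        · injection hval with hv
          rw [Sigma.mk.inj_iff] at hv
          obtain ⟨hj, hfin⟩ := hv
          subst hj
          have hvv : (m : ℕ) = (m' : ℕ) := by simpa using eq_of_heq hfin
          exact congrArg Sum.inr (Sigma.mk.inj_iff.mpr ⟨rfl, heq_of_eq (Fin.ext hvv)⟩)
    · -- fV surjective
      rintro ⟨x, hx⟩
      have hx' : x ≠ Sum.inr ⟨i₀, ⟨0, by omega⟩⟩ := by
        rw [← htgt1]; exact hx
      rcases x with q | ⟨j, m⟩
      · obtain ⟨a, rfl⟩ := Quot.exists_rep q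
        refine ⟨Sum.inl (Quot.mk _ a), Subtype.ext ?_⟩
        try simp only [hF, hqm]
        try rfl
      · by_cases hj : j = i₀
        · replace hj := hj.symm
          subst hj
          have hm0 : (m : ℕ) ≠ 0 := by
            intro h0
            exact hx' (congrArg Sum.inr (Sigma.mk.inj_iff.mpr
              ⟨rfl, heq_of_eq (Fin.ext h0)⟩))
          refine ⟨Sum.inr ⟨i₀, ⟨(m : ℕ) - 1, by have := m.2; omega⟩⟩, Subtype.ext ?_⟩
          simp only [hF]
          rw [dif_pos (by trivial)]
          exact congrArg Sum.inr (Sigma.mk.inj_iff.mpr ⟨rfl, heq_of_eq (Fin.ext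
            (show (m : ℕ) - 1 + 1 = (m : ℕ) by omega))⟩)
        · refine ⟨Sum.inr ⟨j, ⟨(m : ℕ), by have := m.2; have := hplen j hj; omega⟩⟩,
            Subtype.ext ?_⟩
          simp only [hF]
          rw [dif_neg hj]
          try rfl
    · -- fI injective
      intro e e' hee
      have hval : EI e = EI e' := congrArg Subtype.val hee
      rcases e with ⟨j, m⟩; rcases e' with ⟨j', m'⟩
      simp only [hEI] at hval
      by_cases h1 : j = i₀ <;> by_cases h2 : j' = i₀
      · subst h1; subst h2
        rw [dif_pos rfl, dif_pos rfl] at hval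
        by_cases h3 : (m : ℕ) = 0 <;> by_cases h4 : (m' : ℕ) = 0
        · exact Sigma.mk.inj_iff.mpr ⟨rfl, heq_of_eq (Fin.ext
            (show (m : ℕ) = (m' : ℕ) by omega))⟩
        · rw [dif_pos h3, dif_neg h4] at hval
          rw [Sigma.mk.inj_iff] at hval
          have h5 : (0 : ℕ) = (m' : ℕ) + 1 := congrArg Fin.val (eq_of_heq hval.2)
          omega
        · rw [dif_neg h3, dif_pos h4] at hval
          rw [Sigma.mk.inj_iff] at hval
          have h5 : (m : ℕ) + 1 = 0 := congrArg Fin.val (eq_of_heq hval.2)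
          omega
        · rw [dif_neg h3, dif_neg h4] at hval
          rw [Sigma.mk.inj_iff] at hval
          have h5 : (m : ℕ) + 1 = (m' : ℕ) + 1 := congrArg Fin.val (eq_of_heq hval.2)
          exact Sigma.mk.inj_iff.mpr ⟨rfl, heq_of_eq (Fin.ext
            (show (m : ℕ) = (m' : ℕ) by omega))⟩
      · rw [dif_pos h1, dif_neg h2] at hval
        split_ifs at hval <;>
          (rw [Sigma.mk.inj_iff] at hval; exact absurd hval.1.symm h2)
      · rw [dif_neg h1, dif_pos h2] at hval
        split_ifs at hval <;>
          (rw [Sigma.mk.inj_iff] at hval; exact absurd hval.1 h1)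
      · rw [dif_neg h1, dif_neg h2] at hval
        rw [Sigma.mk.inj_iff] at hval
        obtain ⟨hj, hfin⟩ := hval
        subst hj
        have hv : (m : ℕ) = (m' : ℕ) := by simpa using eq_of_heq hfin
        exact Sigma.mk.inj_iff.mpr ⟨rfl, heq_of_eq (Fin.ext hv)⟩
    · -- fI surjective
      rintro ⟨⟨j, m⟩, hne2⟩
      by_cases hj : j = i₀
      · replace hj := hj.symm
        subst hj
        rcases Nat.lt_or_ge (m : ℕ) 1 with h0 | h1
        · refine ⟨⟨i₀, ⟨0, by omega⟩⟩, Subtype.ext ?_⟩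
          simp only [hEI]
          rw [dif_pos (by trivial), dif_pos (by trivial)]
          exact Sigma.mk.inj_iff.mpr ⟨rfl, heq_of_eq (Fin.ext
            (show (0 : ℕ) = (m : ℕ) by omega))⟩
        · have hm1 : (m : ℕ) ≠ 1 := by
            intro h
            exact hne2 (Sigma.mk.inj_iff.mpr ⟨rfl, heq_of_eq (Fin.ext h)⟩)
          have hm2 : 2 ≤ (m : ℕ) := by omega
          refine ⟨⟨i₀, ⟨(m : ℕ) - 1, by have := m.2; omega⟩⟩, Subtype.ext ?_⟩
          simp only [hEI]
          rw [dif_pos (by trivial), dif_neg (show ¬((m : ℕ) - 1 = 0) by omega)]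
          exact Sigma.mk.inj_iff.mpr ⟨rfl, heq_of_eq (Fin.ext
            (show (m : ℕ) - 1 + 1 = (m : ℕ) by omega))⟩
      · refine ⟨⟨j, ⟨(m : ℕ), by have := m.2; have := hplen j hj; omega⟩⟩,
          Subtype.ext ?_⟩
        simp only [hEI]
        rw [dif_neg hj]
        try rfl
    · -- src condition
      rintro ⟨j, m⟩
      apply Subtype.ext
      show pnode α p (EI ⟨j, m⟩).1 ((EI ⟨j, m⟩).2 : ℕ) = F (pnode α p' j (m : ℕ))
      rw [KN j (m : ℕ) (le_of_lt m.2)]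
      by_cases hj : j = i₀
      · replace hj := hj.symm
        subst hj
        by_cases h0 : (m : ℕ) = 0
        · have hEIe : EI ⟨i₀, m⟩ = ⟨i₀, ⟨0, by omega⟩⟩ := by
            simp only [hEI]; rw [dif_pos (by trivial), dif_pos h0]
          rw [hEIe, if_neg (by omega), h0]
        · have hEIe : EI ⟨i₀, m⟩ = ⟨i₀, ⟨(m : ℕ) + 1, by
              have := m.2
              omega⟩⟩ := by
            simp only [hEI]; rw [dif_pos (by trivial), dif_neg h0]
          rw [hEIe, if_pos ⟨rfl, by omega⟩]
      · have hEIe : EI ⟨j, m⟩ = ⟨j, ⟨(m : ℕ), by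
            have := m.2
            have := hplen j hj
            omega⟩⟩ := by
          simp only [hEI]; rw [dif_neg hj]
        rw [hEIe, if_neg (by tauto)]
    · -- tgt condition
      rintro ⟨j, m⟩
      apply Subtype.ext
      rw [contractAt_tgt_val]
      show @ite _ (EI ⟨j, m⟩ = i₁) (propDecidable _) ((partQ α p).tgt i₂)
          ((partQ α p).tgt (EI ⟨j, m⟩)) = F (pnode α p' j ((m : ℕ) + 1))
      rw [hi₁, hi₂]
      rw [KN j ((m : ℕ) + 1) m.2]
      by_cases hj : j = i₀
      · replace hj := hj.symm
        subst hj
        by_cases h0 : (m : ℕ) = 0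
        · have hEIe : EI ⟨i₀, m⟩ = ⟨i₀, ⟨0, by omega⟩⟩ := by
            simp only [hEI]; rw [dif_pos (by trivial), dif_pos h0]
          rw [hEIe, if_pos rfl, if_pos ⟨rfl, by omega⟩, h0]
          rfl
        · have hEIe : EI ⟨i₀, m⟩ = ⟨i₀, ⟨(m : ℕ) + 1, by
              have := m.2
              omega⟩⟩ := by
            simp only [hEI]; rw [dif_pos (by trivial), dif_neg h0]
          rw [hEIe, if_neg (by
              intro hc
              rw [Sigma.mk.inj_iff] at hc
              have h5 : (m : ℕ) + 1 = 0 := congrArg Fin.val (eq_of_heq hc.2)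
              omega),
            if_pos ⟨rfl, by omega⟩]
          rfl
      · have hEIe : EI ⟨j, m⟩ = ⟨j, ⟨(m : ℕ), by
            have := m.2
            have := hplen j hj
            omega⟩⟩ := by
          simp only [hEI]; rw [dif_neg hj]
        rw [hEIe, if_neg (by
            intro hc
            rw [Sigma.mk.inj_iff] at hc
            exact hj hc.1),
          if_neg (by tauto)]
        rfl
    · -- lang condition
      rintro ⟨j, m⟩
      rw [contractAt_lang_eq]
      show @ite _ (EI ⟨j, m⟩ = i₁) (propDecidable _)
          (Lconcat ((partQ α p).lang i₁) ((partQ α p).lang i₂))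
          ((partQ α p).lang (EI ⟨j, m⟩)) = {(p' j).get m}
      rw [hi₁, hi₂]
      by_cases hj : j = i₀
      · replace hj := hj.symm
        subst hj
        by_cases h0 : (m : ℕ) = 0
        · have hEIe : EI ⟨i₀, m⟩ = ⟨i₀, ⟨0, by omega⟩⟩ := by
            simp only [hEI]; rw [dif_pos (by trivial), dif_pos h0]
          rw [hEIe, if_pos rfl]
          show Lconcat {(p i₀).get ⟨0, by omega⟩} {(p i₀).get ⟨1, by omega⟩} = _
          rw [Lconcat_single]
          have hg1 : (p i₀).get ⟨0, by omega⟩ = b₁ := by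
            rw [List.get_eq_getElem]
            simp [List.getElem_of_eq hsplit]
          have hg2 : (p i₀).get ⟨1, by omega⟩ = b₂ := by
            rw [List.get_eq_getElem]
            simp [List.getElem_of_eq hsplit]
          have hg3 : (p' i₀).get m = b₁ ++ b₂ := by
            rw [List.get_eq_getElem]
            simp [List.getElem_of_eq hsplit', h0]
          rw [hg1, hg2, hg3]
        · have hEIe : EI ⟨i₀, m⟩ = ⟨i₀, ⟨(m : ℕ) + 1, by
              have := m.2
              omega⟩⟩ := by
            simp only [hEI]; rw [dif_pos (by trivial), dif_neg h0]
          rw [hEIe, if_neg (by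
              intro hc
              rw [Sigma.mk.inj_iff] at hc
              have h5 : (m : ℕ) + 1 = 0 := congrArg Fin.val (eq_of_heq hc.2)
              omega)]
          show ({(p i₀).get ⟨(m : ℕ) + 1, by have := m.2; omega⟩} : Set (List A)) = _
          have hgv : (p i₀).get ⟨(m : ℕ) + 1, by have := m.2; omega⟩ =
              (p' i₀).get m := by
            rw [List.get_eq_getElem, List.get_eq_getElem]
            obtain ⟨mm, hmm⟩ : ∃ mm, (m : ℕ) = mm + 1 := ⟨(m : ℕ) - 1, by omega⟩
            simp [List.getElem_of_eq hsplit, List.getElem_of_eq hsplit', hmm]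
          rw [hgv]
      · have hEIe : EI ⟨j, m⟩ = ⟨j, ⟨(m : ℕ), by
            have := m.2
            have := hplen j hj
            omega⟩⟩ := by
          simp only [hEI]; rw [dif_neg hj]
        rw [hEIe, if_neg (by
            intro hc
            rw [Sigma.mk.inj_iff] at hc
            exact hj hc.1)]
        show ({(p j).get ⟨(m : ℕ), by have := m.2; have := hplen j hj; omega⟩} :
          Set (List A)) = _
        have hgv : (p j).get ⟨(m : ℕ), by have := m.2; have := hplen j hj; omega⟩ =
            (p' j).get m := by
          rw [List.get_eq_getElem, List.get_eq_getElem]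
          exact (List.getElem_of_eq (hother j hj) _).symm
        rw [hgv]
    · -- out condition
      intro k
      apply Subtype.ext
      try simp only [hF, hqm]
      try rfl

end ContractChain


section ChainAndMinor

variable {A : Type} {n : ℕ}

/-- Merge all blocks of a partition into one. -/
def mergeAll : List (List A) → List (List A)
  | [] => []
  | b :: r => [b ++ r.foldr (· ++ ·) []]

lemma mergeAll_nil : mergeAll ([] : List (List A)) = [] := rfl

lemma mergeAll_one (b : List A) : mergeAll [b] = [b] := by simp [mergeAll]

lemma mergeAll_cons2 (b₁ b₂ : List A) (r : List (List A)) :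
    mergeAll (b₁ :: b₂ :: r) = mergeAll ((b₁ ++ b₂) :: r) := by
  simp [mergeAll, List.append_assoc]

lemma mergeAll_cons (r : List (List A)) (b : List A) :
    mergeAll (b :: r) = [b ++ r.foldr (· ++ ·) []] := rfl

lemma foldr_sing (w : List A) : (sing w).foldr (· ++ ·) [] = w := by
  induction w with
  | nil => rfl
  | cons a w ih => simp [sing] at ih ⊢; exact ih

lemma mergeAll_sing_ne (w : List A) (h : w ≠ []) : mergeAll (sing w) = [w] := by
  rcases w with _ | ⟨a, w'⟩
  · exact absurd rfl h
  · show mergeAll ([a] :: sing w') = _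
    rw [mergeAll_cons, foldr_sing]
    rfl

open Classical in
lemma partQ_chain_at (α : CRPQ A n) (i₀ : α.I) : ∀ (N : ℕ) (q : α.I → List (List A)),
    (q i₀).length ≤ N →
    Relation.ReflTransGen ContractStep (partQ α q)
      (partQ α (fun j => if j = i₀ then mergeAll (q j) else q j)) := by
  classical
  intro N
  induction N with
  | zero =>
    intro q hq
    have hnil : q i₀ = [] := List.length_eq_zero_iff.mp (by omega)
    have heq : (fun j => if j = i₀ then mergeAll (q j) else q j) = q := by
      funext j
      by_cases h : j = i₀
      · rw [if_pos h, h, hnil, mergeAll_nil]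
      · rw [if_neg h]
    rw [heq]
  | succ N ih =>
    intro q hq
    rcases hsp : q i₀ with _ | ⟨b₁, _ | ⟨b₂, r⟩⟩
    · have heq : (fun j => if j = i₀ then mergeAll (q j) else q j) = q := by
        funext j
        by_cases h : j = i₀
        · rw [if_pos h, h, hsp, mergeAll_nil]
        · rw [if_neg h]
      rw [heq]
    · have heq : (fun j => if j = i₀ then mergeAll (q j) else q j) = q := by
        funext j
        by_cases h : j = i₀
        · rw [if_pos h, h, hsp, mergeAll_one]
        · rw [if_neg h]
      rw [heq]
    · set q' := fun j => if j = i₀ then (b₁ ++ b₂) :: r else q j with hq'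
      have hstep := partQ_contract_step α q q' i₀ b₁ b₂ r hsp (by rw [hq']; simp)
        (fun j hj => by rw [hq']; simp [hj])
      have hlq : (q' i₀).length ≤ N := by
        have h2 := congrArg List.length hsp
        simp at h2
        rw [hq']
        simp
        omega
      have htail := ih q' hlq
      have hend : (fun j => if j = i₀ then mergeAll (q' j) else q' j) =
          (fun j => if j = i₀ then mergeAll (q j) else q j) := by
        funext j
        by_cases h : j = i₀
        · rw [if_pos h, if_pos h, h,
            show q' i₀ = (b₁ ++ b₂) :: r by rw [hq']; simp, hsp, mergeAll_cons2]
        · rw [if_neg h, if_neg h, show q' j = q j by rw [hq']; simp [h]]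
      rw [hend] at htail
      exact Relation.ReflTransGen.head hstep htail

lemma partQ_chain (α : CRPQ A n) (q : α.I → List (List A)) :
    Relation.ReflTransGen ContractStep (partQ α q)
      (partQ α (fun j => mergeAll (q j))) := by
  classical
  haveI := α.finI
  haveI : Fintype α.I := Fintype.ofFinite _
  suffices h : ∀ s : Finset α.I, Relation.ReflTransGen ContractStep (partQ α q)
      (partQ α (fun j => if j ∈ s then mergeAll (q j) else q j)) by
    have h2 := h Finset.univ
    have heq : (fun j => if j ∈ (Finset.univ : Finset α.I) then mergeAll (q j) else q j) =
        fun j => mergeAll (q j) := funext fun j => by simp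
    rwa [heq] at h2
  intro s
  induction s using Finset.induction_on with
  | empty =>
    have heq : (fun j => if j ∈ (∅ : Finset α.I) then mergeAll (q j) else q j) = q :=
      funext fun j => by simp
    rw [heq]
  | @insert i₀ s' hi ih =>
    set qs := fun j => if j ∈ s' then mergeAll (q j) else q j with hqs
    have hat := partQ_chain_at α i₀ (qs i₀).length qs le_rfl
    have hend : (fun j => if j = i₀ then mergeAll (qs j) else qs j) =
        (fun j => if j ∈ insert i₀ s' then mergeAll (q j) else q j) := by
      funext j
      by_cases h : j = i₀
      · subst h
        rw [if_pos rfl, if_pos (Finset.mem_insert_self _ _), hqs]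
        simp [hi]
      · rw [if_neg h, hqs]
        by_cases h2 : j ∈ s'
        · simp [h2, Finset.mem_insert, h]
        · simp [h2, Finset.mem_insert, h]
    rw [hend] at hat
    exact ih.trans hat

/-- Quotient multigraph of `α` by contracting the atoms in `S`. -/
def Mgr (α : CRPQ A n) (S : α.I → Prop) : MGraph where
  V := Quot (fun u v => ∃ i, S i ∧ u = α.src i ∧ v = α.tgt i)
  E := {i : α.I // ¬ S i}
  src e := Quot.mk _ (α.src e.1)
  tgt e := Quot.mk _ (α.tgt e.1)
  out := ∅

open Relation in
lemma eqvGen_of_empty {V : Type} {R : V → V → Prop} (hR : ∀ a b, ¬ R a b) {a b : V}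
    (h : EqvGen R a b) : a = b := by
  induction h with
  | rel a b hr => exact absurd hr (hR a b)
  | refl a => rfl
  | symm _ _ _ ih => exact ih.symm
  | trans _ _ _ _ _ ih1 ih2 => exact ih1.trans ih2

open Relation in
lemma eqvGen_extend {V : Type} (R R' : V → V → Prop) (x y : V)
    (h : ∀ a b, R' a b ↔ R a b ∨ (a = x ∧ b = y)) (a b : V) :
    EqvGen R' a b ↔ EqvGen R a b ∨ (EqvGen R a x ∧ EqvGen R y b) ∨
      (EqvGen R a y ∧ EqvGen R x b) := by
  have hmono : ∀ {a b}, EqvGen R a b → EqvGen R' a b :=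
    fun h2 => EqvGen.mono (fun a b hr => (h a b).2 (Or.inl hr)) _ _ h2
  constructor
  · intro hd
    induction hd with
    | rel a b hr =>
      rcases (h a b).1 hr with hr | ⟨rfl, rfl⟩
      · exact Or.inl (EqvGen.rel _ _ hr)
      · exact Or.inr (Or.inl ⟨EqvGen.refl _, EqvGen.refl _⟩)
    | refl a => exact Or.inl (EqvGen.refl a)
    | symm a b _ ih =>
      rcases ih with h1 | ⟨h1, h2⟩ | ⟨h1, h2⟩
      · exact Or.inl (EqvGen.symm _ _ h1)
      · exact Or.inr (Or.inr ⟨EqvGen.symm _ _ h2, EqvGen.symm _ _ h1⟩)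
      · exact Or.inr (Or.inl ⟨EqvGen.symm _ _ h2, EqvGen.symm _ _ h1⟩)
    | trans a b c _ _ ih1 ih2 =>
      rcases ih1 with h1 | ⟨h1, h2⟩ | ⟨h1, h2⟩ <;>
        rcases ih2 with h3 | ⟨h3, h4⟩ | ⟨h3, h4⟩
      · exact Or.inl (EqvGen.trans _ _ _ h1 h3)
      · exact Or.inr (Or.inl ⟨EqvGen.trans _ _ _ h1 h3, h4⟩)
      · exact Or.inr (Or.inr ⟨EqvGen.trans _ _ _ h1 h3, h4⟩)
      · exact Or.inr (Or.inl ⟨h1, EqvGen.trans _ _ _ h2 h3⟩)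
      · exact Or.inr (Or.inl ⟨h1, h4⟩)
      · exact Or.inl (EqvGen.trans _ _ _ h1 h4)
      · exact Or.inr (Or.inr ⟨h1, EqvGen.trans _ _ _ h2 h3⟩)
      · exact Or.inl (EqvGen.trans _ _ _ h1 h4)
      · exact Or.inr (Or.inr ⟨h1, h4⟩)
  · rintro (h1 | ⟨h1, h2⟩ | ⟨h1, h2⟩)
    · exact hmono h1
    · exact EqvGen.trans _ _ _ (hmono h1)
        (EqvGen.trans _ _ _ (EqvGen.rel _ _ ((h x y).2 (Or.inr ⟨rfl, rfl⟩))) (hmono h2))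
    · exact EqvGen.trans _ _ _ (hmono h1)
        (EqvGen.trans _ _ _
          (EqvGen.symm _ _ (EqvGen.rel _ _ ((h x y).2 (Or.inr ⟨rfl, rfl⟩)))) (hmono h2))

lemma minor_step_empty (α : CRPQ A n) : MinorStep α.toMGraph (Mgr α (fun _ => False)) := by
  left
  refine ⟨Quot.mk _, fun i => ⟨i, not_false⟩, ⟨?_, ?_⟩, ⟨?_, ?_⟩, fun e => rfl, fun e => rfl⟩
  · intro a b h
    erw [Quot.eq] at h
    exact eqvGen_of_empty (by rintro a b ⟨i, hFalse, _, _⟩; exact hFalse) h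
  · exact fun q => Quot.inductionOn q fun a => ⟨a, rfl⟩
  · exact fun i j h => congrArg Subtype.val h
  · exact fun e => ⟨e.1, Subtype.ext rfl⟩

lemma minor_step_insert (α : CRPQ A n) (S : α.I → Prop) (i₀ : α.I) (hi₀ : ¬ S i₀) :
    MinorStep (Mgr α S) (Mgr α (fun i => S i ∨ i = i₀)) := by
  right; right; right
  refine ⟨⟨i₀, hi₀⟩, ?_⟩
  set R : α.V → α.V → Prop := fun u v => ∃ i, S i ∧ u = α.src i ∧ v = α.tgt i with hR
  set R' : α.V → α.V → Prop :=
    fun u v => ∃ i, (S i ∨ i = i₀) ∧ u = α.src i ∧ v = α.tgt i with hR'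
  have hiff : ∀ a b, R' a b ↔ R a b ∨ (a = α.src i₀ ∧ b = α.tgt i₀) := by
    intro a b
    constructor
    · rintro ⟨i, hs | rfl, rfl, rfl⟩
      · exact Or.inl ⟨i, hs, rfl, rfl⟩
      · exact Or.inr ⟨rfl, rfl⟩
    · rintro (⟨i, hs, rfl, rfl⟩ | ⟨rfl, rfl⟩)
      · exact ⟨i, Or.inl hs, rfl, rfl⟩
      · exact ⟨i₀, Or.inr rfl, rfl, rfl⟩
  refine ⟨Quot.lift (Quot.mk R') (fun a b hab => Quot.sound ((hiff a b).mpr (Or.inl hab))),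
    fun e => ⟨e.1.1, ?_⟩, ?_, ⟨?_, ?_⟩, ?_, fun e => rfl, fun e => rfl⟩
  · rintro (h | h)
    · exact e.1.2 h
    · exact e.2 (Subtype.ext h)
  · exact fun q => Quot.inductionOn q fun a => ⟨Quot.mk _ a, rfl⟩
  · intro e e' h
    have h2 : e.1.1 = e'.1.1 :=
      congrArg (fun z : {i : α.I // ¬ (S i ∨ i = i₀)} => z.1) h
    exact Subtype.ext (Subtype.ext h2)
  · rintro ⟨i, hi⟩
    have h1 : ¬ S i := fun h => hi (Or.inl h)
    have h2 : i ≠ i₀ := fun h => hi (Or.inr h)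
    exact ⟨⟨⟨i, h1⟩, fun h => h2 (congrArg Subtype.val h)⟩, Subtype.ext rfl⟩
  · intro u v
    refine Quot.inductionOn u fun a => Quot.inductionOn v fun b => ?_
    show Quot.mk R' a = Quot.mk R' b ↔ (Quot.mk R a = Quot.mk R b ∨
      (Quot.mk R a = Quot.mk R (α.src i₀) ∧ Quot.mk R b = Quot.mk R (α.tgt i₀)) ∨
      (Quot.mk R a = Quot.mk R (α.tgt i₀) ∧ Quot.mk R b = Quot.mk R (α.src i₀)))
    simp only [Quot.eq]
    rw [eqvGen_extend R R' (α.src i₀) (α.tgt i₀) hiff a b]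
    constructor
    · rintro (h1 | ⟨h1, h2⟩ | ⟨h1, h2⟩)
      · exact Or.inl h1
      · exact Or.inr (Or.inl ⟨h1, Relation.EqvGen.symm _ _ h2⟩)
      · exact Or.inr (Or.inr ⟨h1, Relation.EqvGen.symm _ _ h2⟩)
    · rintro (h1 | ⟨h1, h2⟩ | ⟨h1, h2⟩)
      · exact Or.inl h1
      · exact Or.inr (Or.inl ⟨h1, Relation.EqvGen.symm _ _ h2⟩)
      · exact Or.inr (Or.inr ⟨h1, Relation.EqvGen.symm _ _ h2⟩)

lemma minor_chain (α : CRPQ A n) : ∀ s : Finset α.I,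
    Relation.ReflTransGen MinorStep α.toMGraph (Mgr α (fun i => i ∈ s)) := by
  classical
  intro s
  induction s using Finset.induction_on with
  | empty =>
    have heq : (fun i : α.I => i ∈ (∅ : Finset α.I)) = fun _ => False :=
      funext fun i => by simp
    rw [heq]
    exact Relation.ReflTransGen.single (minor_step_empty α)
  | @insert i₀ s' hi ih =>
    have hstep := minor_step_insert α (fun i => i ∈ s') i₀ hi
    have heq : (fun i : α.I => i ∈ s' ∨ i = i₀) = fun i => i ∈ insert i₀ s' :=
      funext fun i => propext (by simp [Finset.mem_insert, or_comm])
    rw [heq] at hstep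
    exact ih.tail hstep

open Classical in
lemma minor_final (α : CRPQ A n) (w : α.I → List A) :
    MinorStep (Mgr α (fun i => w i = []))
      (partQ α (fun i => mergeAll (sing (w i)))).toMGraph := by
  classical
  left
  set p : α.I → List (List A) := fun i => mergeAll (sing (w i)) with hp
  have hpe : ∀ i, w i = [] → p i = [] := by
    intro i h
    rw [hp]
    show mergeAll (sing (w i)) = []
    rw [h]
    exact mergeAll_nil
  have hpne : ∀ i, w i ≠ [] → p i = [w i] := by
    intro i h
    rw [hp]
    exact mergeAll_sing_ne (w i) h
  have hlen1 : ∀ i, w i ≠ [] → (p i).length = 1 := fun i h => by rw [hpne i h]; rfl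
  have hlen0 : ∀ i, w i = [] → (p i).length = 0 := fun i h => by rw [hpe i h]; rfl
  have hiff : ∀ a b, (∃ i, (w i = []) ∧ a = α.src i ∧ b = α.tgt i) ↔ qrel α p a b := by
    intro a b
    constructor
    · rintro ⟨i, hnil, rfl, rfl⟩
      exact ⟨i, hpe i hnil, rfl, rfl⟩
    · rintro ⟨i, hnil, rfl, rfl⟩
      refine ⟨i, ?_, rfl, rfl⟩
      by_contra hc
      rw [hpne i hc] at hnil
      exact List.cons_ne_nil _ _ hnil
  set qm : (Mgr α (fun i => w i = [])).V → Quot (qrel α p) :=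
    Quot.lift (Quot.mk _) (fun a b hab => Quot.sound ((hiff a b).mp hab)) with hqm
  set qm' : Quot (qrel α p) → (Mgr α (fun i => w i = [])).V :=
    Quot.lift (Quot.mk _) (fun a b hab => Quot.sound ((hiff a b).mpr hab)) with hqm'
  have hqm1 : ∀ x, qm' (qm x) = x := fun x => Quot.inductionOn x fun a => by
    rw [hqm, hqm']
  refine ⟨fun q => Sum.inl (qm q),
    fun e => ⟨e.1, ⟨0, by rw [hlen1 e.1 e.2]; omega⟩⟩, ⟨?_, ?_⟩, ⟨?_, ?_⟩, ?_, ?_⟩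
  · intro q q' h
    erw [Sum.inl.injEq] at h
    have h2 : qm' (qm q) = qm' (qm q') := by rw [h]
    rwa [hqm1, hqm1] at h2
  · rintro (q | ⟨i, m⟩)
    · obtain ⟨a, rfl⟩ := Quot.exists_rep q
      refine ⟨Quot.mk _ a, ?_⟩
      rw [hqm]
    · exfalso
      have hm := m.2
      by_cases h : w i = []
      · have := hlen0 i h; omega
      · have := hlen1 i h; omega
  · intro e e' h
    erw [Sigma.mk.inj_iff] at h
    exact Subtype.ext h.1
  · rintro ⟨i, k⟩
    have hne : w i ≠ [] := by
      intro h
      have h2 := k.2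
      have h3 := hlen0 i h
      omega
    refine ⟨⟨i, hne⟩, ?_⟩
    exact Sigma.mk.inj_iff.mpr ⟨rfl, heq_of_eq (Fin.ext
      (show (0 : ℕ) = (k : ℕ) by have := k.2; have := hlen1 i hne; omega))⟩
  · intro e
    show pnode α p e.1 0 = Sum.inl (qm (Quot.mk _ (α.src e.1)))
    rw [pnode_zero, hqm]
  · intro e
    show pnode α p e.1 1 = Sum.inl (qm (Quot.mk _ (α.tgt e.1)))
    rw [pnode_last α p e.1 1 (by omega) (by rw [hlen1 e.1 e.2]), hqm]

lemma minor_of_partQ (α : CRPQ A n) (w : α.I → List A) :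
    IsMinorOf (partQ α (fun i => mergeAll (sing (w i)))).toMGraph α.toMGraph := by
  classical
  haveI := α.finI
  haveI : Fintype α.I := Fintype.ofFinite _
  have hchain := minor_chain α (Finset.univ.filter (fun i => w i = []))
  have heq : (fun i => i ∈ Finset.univ.filter (fun i => w i = [])) =
      fun i => w i = [] := funext fun i => propext (by simp)
  rw [heq] at hchain
  exact hchain.tail (minor_final α w)

lemma sing_get' (w : List A) (k : Fin (sing w).length) :
    (sing w).get k = [w.get ⟨k.1, by have := k.2; simpa using this⟩] := by
  exact sing_get w k.1 _

end ChainAndMinor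

/-- For a minor-closed class `𝒞`, `App Γ 𝒞` is the maximal under-approximation of `Γ`
by (possibly infinite) unions of CRPQs with underlying graphs in `𝒞`:
(1) all its members have underlying graph in `𝒞`; (2) it is contained in `Γ`;
(3) any union of CRPQs over `𝒞` contained in `Γ` is contained in it. -/
theorem maximal_under_approximation {A : Type} {n : ℕ}
    (𝒞 : MGraph → Prop) (hclosed : ∀ G H, 𝒞 G → IsMinorOf H G → 𝒞 H)
    (Γ : List (CRPQ A n)) :
    (∀ α ∈ App Γ 𝒞, 𝒞 α.toMGraph) ∧
    (∀ (G : DB A) (t : Fin n → G.V),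
      (∃ α ∈ App Γ 𝒞, α.sat G t) → (∃ γ ∈ Γ, γ.sat G t)) ∧
    (∀ 𝒰 : Set (CRPQ A n), (∀ α ∈ 𝒰, 𝒞 α.toMGraph) →
      (∀ (G : DB A) (t : Fin n → G.V),
        (∃ α ∈ 𝒰, α.sat G t) → (∃ γ ∈ Γ, γ.sat G t)) →
      (∀ (G : DB A) (t : Fin n → G.V),
        (∃ α ∈ 𝒰, α.sat G t) → (∃ α ∈ App Γ 𝒞, α.sat G t))) := by
  refine ⟨fun α h => h.1, ?_, ?_⟩
  · intro G t h
    obtain ⟨α, hmem, hsat⟩ := h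
    obtain ⟨hC, γ, hγ, w, hw, η, hCQ, ⟨u, hu2, hom⟩, hchain⟩ := hmem
    exact ⟨γ, hγ, sat_of_expSat hw (satDB_expSat (satDB_of_homTo hom
      (expSat_satDB (expSat_of_sat_CQ hCQ hu2 (contract_chain_sat hchain hsat)))))⟩
  · intro 𝒰 h𝒞 hcont G t h
    classical
    obtain ⟨α, hα𝒰, hsat⟩ := h
    obtain ⟨h0, ho, hp⟩ := hsat
    choose w hw hpath using hp
    set η := partQ α (fun i => sing (w i)) with hη
    have hCQ : η.IsCQ := partQ_sing_isCQ α w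
    set u : η.I → List A := fun e => (sing (w e.1)).get e.2 with hu
    have huw : η.IsExpansionWords u := fun e => rfl
    have hulen : ∀ e, (u e).length = 1 := by
      rintro ⟨i, k⟩
      show ((sing (w i)).get k).length = 1
      rw [sing_get']
      rfl
    have hlab : ∀ e a, [a] ∈ η.lang e → u e = [a] := by
      rintro ⟨i, k⟩ a hmem
      exact (Set.mem_singleton_iff.mp hmem).symm
    have hαdb : α.sat (dbOf η) (fun k => η.out k) := partQ_sat_dbOf α w hw
    obtain ⟨γ, hγΓ, hγsat⟩ := hcont (dbOf η) (fun k => η.out k) ⟨α, hα𝒰, hαdb⟩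
    obtain ⟨w', hw', hom⟩ := hom_of_sat_dbOf η u huw hulen hlab γ hγsat
    refine ⟨partQ α (fun i => mergeAll (sing (w i))),
      ⟨?_, γ, hγΓ, w', hw', η, hCQ, ⟨u, huw, hom⟩, ?_⟩, ?_⟩
    · exact hclosed _ _ (h𝒞 α hα𝒰) (minor_of_partQ α w)
    · exact partQ_chain α (fun i => sing (w i))
    · exact partQ_final_sat α w (fun i => mergeAll (sing (w i)))
        (fun i hnil => by
          show mergeAll (sing (w i)) = []
          rw [hnil]
          exact mergeAll_nil)
        (fun i hnnil => mergeAll_sing_ne (w i) hnnil)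
        h0 ho hpath
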